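/- If G is a graph with exactly k isolated vertices, then Z(G) ≤ Z(L(G)) + k. -/

import Mathlib

open scoped BigOperators

namespace Paper

variable {V : Type*}

/-- The zero-forcing closure: vertices that eventually become black starting from `S`. -/
inductive ZFClosure (G : SimpleGraph V) (S : Set V) : V → Prop
  | init {v : V} : v ∈ S → ZFClosure G S v
  | force {v w : V} : ZFClosure G S v → G.Adj v w →
      (∀ u, G.Adj v u → u ≠ w → ZFClosure G S u) → ZFClosure G S w

/-- `S` is a zero-forcing set of `G`. -/
def IsZeroForcingSet (G : SimpleGraph V) (S : Set V) : Prop :=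
  ∀ v : V, ZFClosure G S v

/-- The zero-forcing number `Z(G)`. -/
noncomputable def zfNumber (G : SimpleGraph V) : ℕ :=
  sInf {n | ∃ S : Set V, IsZeroForcingSet G S ∧ S.ncard = n}

/-- A state of the brushing process: the set of vertices that have fired (and hence
are clean), the set of dirty edges, and the number of brushes at each vertex. -/
structure BrushConfig (V : Type*) where
  fired : Set V
  dirty : Set (Sym2 V)
  brushes : V → ℕ

open Classical in
def BrushStep (G : SimpleGraph V) (restricted : Bool) (c c' : BrushConfig V) : Prop :=
  ∃ (v : V) (f : Sym2 V → ℕ),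
    v ∉ c.fired ∧
    (∀ e ∈ c.dirty, v ∈ e → if restricted then f e = 1 else 1 ≤ f e) ∧
    (∑ᶠ e ∈ {e ∈ c.dirty | v ∈ e}, f e) ≤ c.brushes v ∧
    c'.fired = insert v c.fired ∧
    c'.dirty = {e ∈ c.dirty | v ∉ e} ∧
    ∀ w : V, c'.brushes w =
      (if w = v then 0 else c.brushes w) + c.dirty.indicator f s(v, w)

/-- The initial brush configuration `ω` cleans the graph `G`:  starting with every vertex
and every edge dirty, some sequence of firings results in every vertex having fired. -/
def Cleans (G : SimpleGraph V) (restricted : Bool) (ω : V → ℕ) : Prop :=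
  ∃ c : BrushConfig V,
    Relation.ReflTransGen (BrushStep G restricted) ⟨∅, G.edgeSet, ω⟩ c ∧
    c.fired = Set.univ

/-- The brushing number `B(G)` (several brushes may traverse a single edge). -/
noncomputable def brushNumber (G : SimpleGraph V) : ℕ :=
  sInf {n | ∃ ω : V → ℕ, Cleans G false ω ∧ ∑ᶠ v, ω v = n}

/-- The restricted brushing number `b(G)` (each edge is traversed by exactly one brush). -/
noncomputable def brushNumber' (G : SimpleGraph V) : ℕ :=
  sInf {n | ∃ ω : V → ℕ, Cleans G true ω ∧ ∑ᶠ v, ω v = n}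


section Aux

variable {G : SimpleGraph V}

lemma ZFClosure.mono {S T : Set V} (hST : S ⊆ T) {v : V} (h : ZFClosure G S v) :
    ZFClosure G T v := by
  induction h with
  | init h => exact .init (hST h)
  | force h1 hadj h2 ih1 ih2 => exact .force ih1 hadj ih2

lemma ZFClosure.bind {S T : Set V} (hT : ∀ x ∈ T, ZFClosure G S x) {v : V}
    (h : ZFClosure G T v) : ZFClosure G S v := by
  induction h with
  | init h => exact hT _ h
  | force h1 hadj h2 ih1 ih2 => exact .force ih1 hadj ih2

lemma isZeroForcingSet_mono {S T : Set V} (hST : S ⊆ T) (h : IsZeroForcingSet G S) :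
    IsZeroForcingSet G T := fun v => (h v).mono hST

lemma edge_repr (G : SimpleGraph V) (e : G.edgeSet) :
    ∃ a b, G.Adj a b ∧ (e : Sym2 V) = s(a, b) := by
  rcases e with ⟨e, he⟩
  induction e using Sym2.ind with
  | _ a b => exact ⟨a, b, G.mem_edgeSet.1 he, rfl⟩

/-- decompose a pair of distinct edges sharing the vertex `c`. -/
lemma shared_repr (G : SimpleGraph V) (f g : G.edgeSet) (hne : f ≠ g) (c : V)
    (hcf : c ∈ (f : Sym2 V)) (hcg : c ∈ (g : Sym2 V)) :
    ∃ o d, (f : Sym2 V) = s(c, o) ∧ (g : Sym2 V) = s(c, d) ∧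
      G.Adj c o ∧ G.Adj c d ∧ o ≠ d := by
  obtain ⟨a, b, hab, hfab⟩ := edge_repr G f
  obtain ⟨a', b', hab', hgab⟩ := edge_repr G g
  have hf : ∃ o, (f : Sym2 V) = s(c, o) ∧ G.Adj c o := by
    rw [hfab] at hcf ⊢
    rcases Sym2.mem_iff.1 hcf with h | h
    · subst h; exact ⟨b, rfl, hab⟩
    · subst h; exact ⟨a, Sym2.eq_swap, hab.symm⟩
  have hg : ∃ d, (g : Sym2 V) = s(c, d) ∧ G.Adj c d := by
    rw [hgab] at hcg ⊢
    rcases Sym2.mem_iff.1 hcg with h | h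
    · subst h; exact ⟨b', rfl, hab'⟩
    · subst h; exact ⟨a', Sym2.eq_swap, hab'.symm⟩
  obtain ⟨o, hfo, hado⟩ := hf
  obtain ⟨d, hgd, hadd⟩ := hg
  refine ⟨o, d, hfo, hgd, hado, hadd, ?_⟩
  rintro rfl
  exact hne (Subtype.ext (hfo.trans hgd.symm))

lemma exists_first_force (B : Set G.edgeSet) (hZF : IsZeroForcingSet G.lineGraph B)
    (hne : B ≠ Set.univ) :
    ∃ f g : G.edgeSet, f ∈ B ∧ g ∉ B ∧ G.lineGraph.Adj f g ∧
      ∀ h, G.lineGraph.Adj f h → h ≠ g → h ∈ B := by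
  by_contra hcon
  push_neg at hcon
  have hsub : ∀ e, ZFClosure G.lineGraph B e → e ∈ B := by
    intro e he
    induction he with
    | init h => exact h
    | force h1 hadj h2 ih1 ih2 =>
      by_contra hw
      obtain ⟨h, hadj2, hne2, hnB⟩ := hcon _ _ ih1 hw hadj
      exact hnB (ih2 h hadj2 hne2)
  exact hne (Set.eq_univ_of_forall fun e => hsub e (hZF e))

end Aux

open Classical in
/-- Restrict the allowed-endpoints set `Re` of the edge `e` by forbidding `a`,
provided some other endpoint remains allowed. -/
noncomputable def pushAway (a : V) (Re : Set V) (e : Sym2 V) : Set V :=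
  if ∃ x ∈ e, x ≠ a ∧ x ∈ Re then Re ∩ {x | x ≠ a} else Re

lemma pushAway_subset (a : V) (Re : Set V) (e : Sym2 V) : pushAway a Re e ⊆ Re := by
  unfold pushAway
  split
  · exact Set.inter_subset_left
  · exact subset_rfl

lemma pushAway_nonempty {a : V} {Re : Set V} {e : Sym2 V}
    (h : ∃ v ∈ e, v ∈ Re) : ∃ v ∈ e, v ∈ pushAway a Re e := by
  unfold pushAway
  split
  · next hc => obtain ⟨x, hx, hxa, hxR⟩ := hc; exact ⟨x, hx, hxR, hxa⟩
  · exact h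

lemma pushAway_notmem {a x : V} {Re : Set V} {e : Sym2 V}
    (h : x ∉ pushAway a Re e) : x ∉ Re ∨ x = a := by
  unfold pushAway at h
  split at h
  · by_cases hxa : x = a
    · exact Or.inr hxa
    · exact Or.inl (fun hxR => h ⟨hxR, hxa⟩)
  · exact Or.inl h

/-- If `u` is an allowed endpoint of `e = s(a,u)` distinct from `a`, then after
pushing away from `a` the only allowed endpoint is `u`. -/
lemma pushAway_endpoint {a u y : V} {Re : Set V}
    (hau : u ≠ a) (huR : u ∈ Re)
    (hy : y ∈ pushAway a Re (s(a, u))) (hye : y ∈ (s(a, u) : Sym2 V)) : y = u := by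
  unfold pushAway at hy
  rw [if_pos ⟨u, Sym2.mem_mk_right a u, hau, huR⟩] at hy
  rcases Sym2.mem_iff.1 hye with h | h
  · exact absurd h hy.2
  · exact h



/-- the base case: every edge is in `B` and every edge already has a
forbidden endpoint. -/
lemma zf_base (G : SimpleGraph V) (B : Set G.edgeSet) (W : Set V)
    (R : G.edgeSet → Set V)
    (hBu : ∀ e, e ∈ B)
    (hnoun : ∀ e ∈ B, ¬ ∀ x ∈ (e : Sym2 V), x ∈ R e)
    (h2 : ∀ e ∈ B, ∃ v ∈ (e : Sym2 V), v ∈ R e)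
    (h3 : ∀ e ∈ B, ∀ x ∈ (e : Sym2 V), x ∉ R e → x ∈ W) :
    ∃ χ : G.edgeSet → V,
      (∀ e ∈ B, χ e ∈ (e : Sym2 V) ∧ χ e ∈ R e) ∧
      IsZeroForcingSet G (W ∪ {v | ∀ w, ¬ G.Adj v w} ∪ (χ '' B)) := by
  classical
  choose χ hχ1 hχ2 using fun e => h2 e (hBu e)
  refine ⟨χ, fun e _ => ⟨hχ1 e, hχ2 e⟩, ?_⟩
  intro v
  by_cases hiso : ∀ w, ¬ G.Adj v w
  · exact .init (Or.inl (Or.inr hiso))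
  · push_neg at hiso
    obtain ⟨w, hvw⟩ := hiso
    set e : G.edgeSet := ⟨s(v, w), G.mem_edgeSet.2 hvw⟩ with hedef
    have hnot := hnoun e (hBu e)
    push_neg at hnot
    obtain ⟨x, hxe, hxR⟩ := hnot
    have hxe' : x = v ∨ x = w := Sym2.mem_iff.1 hxe
    rcases hxe' with h | h
    · subst h
      exact .init (Or.inl (Or.inl (h3 e (hBu e) x hxe hxR)))
    · -- x = w is forbidden, so χ e = v
      have h1 := hχ1 e
      have h2' := hχ2 e
      have hvw' : χ e = v ∨ χ e = w := Sym2.mem_iff.1 h1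
      rcases hvw' with hv | hw
      · exact .init (Or.inr ⟨e, hBu e, hv⟩)
      · exact absurd (hw.trans h.symm ▸ h2') hxR


lemma zf_pair_step (G : SimpleGraph V) [Fintype V] (n : ℕ) (B : Set G.edgeSet)
    (W : Set V) (R : G.edgeSet → Set V)
    (hmeas : Bᶜ.ncard + {e | e ∈ B ∧ ∀ x ∈ (e : Sym2 V), x ∈ R e}.ncard ≤ n + 1)
    (hZF : IsZeroForcingSet G.lineGraph B)
    (h2 : ∀ e ∈ B, ∃ v ∈ (e : Sym2 V), v ∈ R e)
    (h3 : ∀ e ∈ B, ∀ x ∈ (e : Sym2 V), x ∉ R e → x ∈ W)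
    (hBu : ∀ e, e ∈ B)
    (e₀ : G.edgeSet) (hun : ∀ x ∈ (e₀ : Sym2 V), x ∈ R e₀)
    (ih : ∀ (B : Set G.edgeSet) (W : Set V) (R : G.edgeSet → Set V),
        Bᶜ.ncard + {e | e ∈ B ∧ ∀ x ∈ (e : Sym2 V), x ∈ R e}.ncard ≤ n →
        IsZeroForcingSet G.lineGraph B →
        (∀ e ∈ B, ∃ v ∈ (e : Sym2 V), v ∈ R e) →
        (∀ e ∈ B, ∀ x ∈ (e : Sym2 V), x ∉ R e → x ∈ W) →
        ∃ χ : G.edgeSet → V, (∀ e ∈ B, χ e ∈ (e : Sym2 V) ∧ χ e ∈ R e) ∧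
          IsZeroForcingSet G (W ∪ {v | ∀ w, ¬ G.Adj v w} ∪ (χ '' B))) :
    ∃ χ : G.edgeSet → V, (∀ e ∈ B, χ e ∈ (e : Sym2 V) ∧ χ e ∈ R e) ∧
      IsZeroForcingSet G (W ∪ {v | ∀ w, ¬ G.Adj v w} ∪ (χ '' B)) := by
  classical
  obtain ⟨r, y, hry, he₀⟩ := edge_repr G e₀
  have hyr : y ≠ r := hry.ne'
  have hyme : y ∈ (e₀ : Sym2 V) := by rw [he₀]; exact Sym2.mem_mk_right r y
  have hrme : r ∈ (e₀ : Sym2 V) := by rw [he₀]; exact Sym2.mem_mk_left r y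
  set W' : Set V := W ∪ {r, y} with hW'def
  set R' : G.edgeSet → Set V := fun e =>
    if e = e₀ then pushAway r (R e) e
    else if y ∈ (e : Sym2 V) then pushAway y (R e) e
    else R e with hR'def
  have hR'sub : ∀ e, R' e ⊆ R e := by
    intro e
    simp only [hR'def]
    split
    · exact pushAway_subset _ _ _
    · split
      · exact pushAway_subset _ _ _
      · exact subset_rfl
  have h2' : ∀ e ∈ B, ∃ v ∈ (e : Sym2 V), v ∈ R' e := by
    intro e he
    simp only [hR'def]
    split
    · exact pushAway_nonempty (h2 e he)
    · split
      · exact pushAway_nonempty (h2 e he)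
      · exact h2 e he
  have h3' : ∀ e ∈ B, ∀ x ∈ (e : Sym2 V), x ∉ R' e → x ∈ W' := by
    intro e he x hxe hxR'
    simp only [hR'def] at hxR'
    split at hxR'
    · rcases pushAway_notmem hxR' with h | h
      · exact Or.inl (h3 e he x hxe h)
      · subst h; exact Or.inr (Or.inl rfl)
    · split at hxR'
      · rcases pushAway_notmem hxR' with h | h
        · exact Or.inl (h3 e he x hxe h)
        · subst h; exact Or.inr (Or.inr rfl)
      · exact Or.inl (h3 e he x hxe hxR')
  -- measure decreases
  have hrNotR' : r ∉ R' e₀ := by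
    simp only [hR'def, if_pos rfl]
    rw [he₀]
    unfold pushAway
    rw [if_pos ⟨y, Sym2.mem_mk_right r y, hyr, hun y hyme⟩]
    exact fun h => h.2 rfl
  have hUss : {e | e ∈ B ∧ ∀ x ∈ (e : Sym2 V), x ∈ R' e} ⊂
      {e | e ∈ B ∧ ∀ x ∈ (e : Sym2 V), x ∈ R e} := by
    constructor
    · rintro e ⟨he, hall⟩
      exact ⟨he, fun x hx => hR'sub e (hall x hx)⟩
    · intro hsub
      have := hsub ⟨hBu e₀, hun⟩
      exact hrNotR' (this.2 r hrme)
  have hmeas' : Bᶜ.ncard + {e | e ∈ B ∧ ∀ x ∈ (e : Sym2 V), x ∈ R' e}.ncard ≤ n := by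
    have hlt := Set.ncard_lt_ncard hUss (Set.toFinite _)
    omega
  obtain ⟨χ, hχ, hZFS'⟩ := ih B W' R' hmeas' hZF h2' h3'
  refine ⟨χ, fun e he => ⟨(hχ e he).1, hR'sub e (hχ e he).2⟩, ?_⟩
  set X : Set V := W ∪ {v | ∀ w, ¬ G.Adj v w} ∪ (χ '' B) with hXdef
  have hy_im : χ e₀ = y := by
    have h1 := (hχ e₀ (hBu e₀)).1
    have hmem := (hχ e₀ (hBu e₀)).2
    simp only [hR'def, if_pos rfl] at hmem
    rw [he₀] at hmem h1
    exact pushAway_endpoint hyr (hun y hyme) hmem h1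
  have hyX : ZFClosure G X y := .init (Or.inr ⟨e₀, hBu e₀, hy_im⟩)
  have hrX : ZFClosure G X r := by
    refine .force hyX hry.symm ?_
    intro u hadj hur
    set e' : G.edgeSet := ⟨s(y, u), G.mem_edgeSet.2 hadj⟩ with he'def
    have he'ne : e' ≠ e₀ := by
      intro h
      have : (s(y, u) : Sym2 V) = s(r, y) := by
        rw [← he₀]; exact congrArg Subtype.val h
      rcases Sym2.eq_iff.1 this with ⟨h1, _⟩ | ⟨_, h2⟩
      · exact hyr h1
      · exact hur h2
    have hyine' : y ∈ (e' : Sym2 V) := Sym2.mem_mk_left y u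
    have hRe' : R' e' = pushAway y (R e') e' := by
      simp only [hR'def, if_neg he'ne, if_pos hyine']
    by_cases huR : u ∈ R e'
    · have h1 := (hχ e' (hBu e')).1
      have hmem := (hχ e' (hBu e')).2
      rw [hRe'] at hmem
      have hcoe : (e' : Sym2 V) = s(y, u) := rfl
      rw [hcoe] at hmem h1
      have : χ e' = u := pushAway_endpoint hadj.ne' huR hmem h1
      exact .init (Or.inr ⟨e', hBu e', this⟩)
    · exact .init (Or.inl (Or.inl (h3 e' (hBu e') u (Sym2.mem_mk_right y u) huR)))
  intro v
  refine (hZFS' v).bind ?_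
  rintro x (((hx | hx) | hx) | hx)
  · exact .init (Or.inl (Or.inl hx))
  · rcases hx with hx | hx
    · subst hx; exact hrX
    · subst hx; exact hyX
  · exact .init (Or.inl (Or.inr hx))
  · exact .init (Or.inr hx)


lemma zf_force_step (G : SimpleGraph V) [Fintype V] (n : ℕ) (B : Set G.edgeSet)
    (W : Set V) (R : G.edgeSet → Set V)
    (hmeas : Bᶜ.ncard + {e | e ∈ B ∧ ∀ x ∈ (e : Sym2 V), x ∈ R e}.ncard ≤ n + 1)
    (hZF : IsZeroForcingSet G.lineGraph B)
    (h2 : ∀ e ∈ B, ∃ v ∈ (e : Sym2 V), v ∈ R e)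
    (h3 : ∀ e ∈ B, ∀ x ∈ (e : Sym2 V), x ∉ R e → x ∈ W)
    (hBne : B ≠ Set.univ)
    (ih : ∀ (B : Set G.edgeSet) (W : Set V) (R : G.edgeSet → Set V),
        Bᶜ.ncard + {e | e ∈ B ∧ ∀ x ∈ (e : Sym2 V), x ∈ R e}.ncard ≤ n →
        IsZeroForcingSet G.lineGraph B →
        (∀ e ∈ B, ∃ v ∈ (e : Sym2 V), v ∈ R e) →
        (∀ e ∈ B, ∀ x ∈ (e : Sym2 V), x ∉ R e → x ∈ W) →
        ∃ χ : G.edgeSet → V, (∀ e ∈ B, χ e ∈ (e : Sym2 V) ∧ χ e ∈ R e) ∧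
          IsZeroForcingSet G (W ∪ {v | ∀ w, ¬ G.Adj v w} ∪ (χ '' B))) :
    ∃ χ : G.edgeSet → V, (∀ e ∈ B, χ e ∈ (e : Sym2 V) ∧ χ e ∈ R e) ∧
      IsZeroForcingSet G (W ∪ {v | ∀ w, ¬ G.Adj v w} ∪ (χ '' B)) := by
  classical
  obtain ⟨fE, gE, hfB, hgB, hAdj, hmin⟩ := exists_first_force B hZF hBne
  obtain ⟨hfg, c, hcf, hcg⟩ := SimpleGraph.lineGraph_adj_iff_exists.1 hAdj
  obtain ⟨o, d, hfco, hgcd, hadjco, hadjcd, hod⟩ := shared_repr G fE gE hfg c hcf hcg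
  have hoc : o ≠ c := hadjco.ne'
  have hdc : d ≠ c := hadjcd.ne'
  have homf : o ∈ (fE : Sym2 V) := by rw [hfco]; exact Sym2.mem_mk_right c o
  have hcmf : c ∈ (fE : Sym2 V) := by rw [hfco]; exact Sym2.mem_mk_left c o
  have hdmg : d ∈ (gE : Sym2 V) := by rw [hgcd]; exact Sym2.mem_mk_right c d
  have hcmg : c ∈ (gE : Sym2 V) := by rw [hgcd]; exact Sym2.mem_mk_left c d
  have hfgne : fE ≠ gE := hfg
  set W' : Set V := W ∪ {o, c, d} with hW'def
  set B' : Set G.edgeSet := insert gE B with hB'def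
  set R' : G.edgeSet → Set V := fun e =>
    if e = gE then {d}
    else if e = fE then pushAway c (R e) e
    else if o ∈ (e : Sym2 V) then pushAway o (R e) e
    else if c ∈ (e : Sym2 V) then pushAway c (R e) e
    else R e with hR'def
  have hZF' : IsZeroForcingSet G.lineGraph B' :=
    isZeroForcingSet_mono (Set.subset_insert gE B) hZF
  have hR'sub : ∀ e, e ≠ gE → R' e ⊆ R e := by
    intro e hne
    simp only [hR'def, if_neg hne]
    split
    · exact pushAway_subset _ _ _
    · split
      · exact pushAway_subset _ _ _
      · split
        · exact pushAway_subset _ _ _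
        · exact subset_rfl
  have h2' : ∀ e ∈ B', ∃ v ∈ (e : Sym2 V), v ∈ R' e := by
    rintro e (rfl | he)
    · exact ⟨d, hdmg, by simp [hR'def]⟩
    · have hne : e ≠ gE := fun h => hgB (h ▸ he)
      simp only [hR'def, if_neg hne]
      split
      · exact pushAway_nonempty (h2 e he)
      · split
        · exact pushAway_nonempty (h2 e he)
        · split
          · exact pushAway_nonempty (h2 e he)
          · exact h2 e he
  have h3' : ∀ e ∈ B', ∀ x ∈ (e : Sym2 V), x ∉ R' e → x ∈ W' := by
    rintro e (rfl | he) x hxe hxR'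
    · simp only [hR'def, if_pos rfl, Set.mem_singleton_iff] at hxR'
      rw [hgcd] at hxe
      rcases Sym2.mem_iff.1 hxe with h | h
      · subst h; exact Or.inr (Or.inr (Or.inl rfl))
      · exact absurd h hxR'
    · have hne : e ≠ gE := fun h => hgB (h ▸ he)
      simp only [hR'def, if_neg hne] at hxR'
      split at hxR'
      · rcases pushAway_notmem hxR' with h | h
        · exact Or.inl (h3 e he x hxe h)
        · subst h; exact Or.inr (Or.inr (Or.inl rfl))
      · split at hxR'
        · rcases pushAway_notmem hxR' with h | h
          · exact Or.inl (h3 e he x hxe h)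
          · subst h; exact Or.inr (Or.inl rfl)
        · split at hxR'
          · rcases pushAway_notmem hxR' with h | h
            · exact Or.inl (h3 e he x hxe h)
            · subst h; exact Or.inr (Or.inr (Or.inl rfl))
          · exact Or.inl (h3 e he x hxe hxR')
  -- the measure decreases
  have hcompl : B'ᶜ = Bᶜ \ {gE} := by
    ext x; simp [hB'def, and_comm]
  have hcard1 : (Bᶜ \ {gE}).ncard + 1 = Bᶜ.ncard :=
    Set.ncard_diff_singleton_add_one hgB (Set.toFinite _)
  have hUsub : {e | e ∈ B' ∧ ∀ x ∈ (e : Sym2 V), x ∈ R' e} ⊆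
      {e | e ∈ B ∧ ∀ x ∈ (e : Sym2 V), x ∈ R e} := by
    rintro e ⟨he, hall⟩
    have hne : e ≠ gE := by
      rintro rfl
      have := hall c hcmg
      simp only [hR'def, if_pos rfl, Set.mem_singleton_iff] at this
      exact hdc this.symm
    rcases he with h | h
    · exact absurd h hne
    · exact ⟨h, fun x hx => hR'sub e hne (hall x hx)⟩
  have hmeas' : B'ᶜ.ncard + {e | e ∈ B' ∧ ∀ x ∈ (e : Sym2 V), x ∈ R' e}.ncard ≤ n := by
    have h1 : B'ᶜ.ncard + 1 = Bᶜ.ncard := by rw [hcompl]; exact hcard1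
    have h2 := Set.ncard_le_ncard hUsub (Set.toFinite _)
    omega
  obtain ⟨χ, hχ, hZFS'⟩ := ih B' W' R' hmeas' hZF' h2' h3'
  have hχB : ∀ e ∈ B, χ e ∈ (e : Sym2 V) ∧ χ e ∈ R e := by
    intro e he
    have hne : e ≠ gE := fun h => hgB (h ▸ he)
    exact ⟨(hχ e (Set.mem_insert_of_mem _ he)).1,
      hR'sub e hne ((hχ e (Set.mem_insert_of_mem _ he)).2)⟩
  refine ⟨χ, hχB, ?_⟩
  set X : Set V := W ∪ {v | ∀ w, ¬ G.Adj v w} ∪ (χ '' B) with hXdef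
  have hfmem : fE ∈ B' := Set.mem_insert_of_mem _ hfB
  have hoX : ZFClosure G X o := by
    by_cases hoR : o ∈ R fE
    · have h1 := (hχ fE hfmem).1
      have hmem := (hχ fE hfmem).2
      simp only [hR'def, if_neg hfgne, if_pos rfl] at hmem
      rw [hfco] at hmem h1
      have : χ fE = o := pushAway_endpoint hoc hoR hmem h1
      exact .init (Or.inr ⟨fE, hfB, this⟩)
    · exact .init (Or.inl (Or.inl (h3 fE hfB o homf hoR)))
  have hcX : ZFClosure G X c := by
    refine .force hoX hadjco.symm ?_
    intro u hadj huc
    set e' : G.edgeSet := ⟨s(o, u), G.mem_edgeSet.2 hadj⟩ with he'def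
    have hcoe : (e' : Sym2 V) = s(o, u) := rfl
    have he'f : e' ≠ fE := by
      intro h
      have : (s(o, u) : Sym2 V) = s(c, o) := by rw [← hfco]; exact congrArg Subtype.val h
      rcases Sym2.eq_iff.1 this with ⟨h1, _⟩ | ⟨_, h2⟩
      · exact hoc h1
      · exact huc h2
    have he'g : e' ≠ gE := by
      intro h
      have : (s(o, u) : Sym2 V) = s(c, d) := by rw [← hgcd]; exact congrArg Subtype.val h
      rcases Sym2.eq_iff.1 this with ⟨h1, _⟩ | ⟨h1, _⟩
      · exact hoc h1
      · exact hod h1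
    have hLadj : G.lineGraph.Adj fE e' :=
      SimpleGraph.lineGraph_adj_iff_exists.2 ⟨Ne.symm he'f, o, homf, Sym2.mem_mk_left o u⟩
    have he'B : e' ∈ B := hmin e' hLadj he'g
    have hRe' : R' e' = pushAway o (R e') e' := by
      simp only [hR'def, if_neg he'g, if_neg he'f, if_pos (show o ∈ (e' : Sym2 V) from Sym2.mem_mk_left o u)]
    by_cases huR : u ∈ R e'
    · have h1 := (hχ e' (Set.mem_insert_of_mem _ he'B)).1
      have hmem := (hχ e' (Set.mem_insert_of_mem _ he'B)).2
      rw [hRe'] at hmem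
      rw [hcoe] at hmem h1
      have : χ e' = u := pushAway_endpoint hadj.ne' huR hmem h1
      exact .init (Or.inr ⟨e', he'B, this⟩)
    · exact .init (Or.inl (Or.inl (h3 e' he'B u (Sym2.mem_mk_right o u) huR)))
  have hdX : ZFClosure G X d := by
    refine .force hcX hadjcd ?_
    intro u hadj hud
    by_cases huo : u = o
    · subst huo; exact hoX
    · set e' : G.edgeSet := ⟨s(c, u), G.mem_edgeSet.2 hadj⟩ with he'def
      have hcoe : (e' : Sym2 V) = s(c, u) := rfl
      have he'f : e' ≠ fE := by
        intro h
        have : (s(c, u) : Sym2 V) = s(c, o) := by rw [← hfco]; exact congrArg Subtype.val h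
        rcases Sym2.eq_iff.1 this with ⟨_, h2⟩ | ⟨h1, _⟩
        · exact huo h2
        · exact hoc h1.symm
      have he'g : e' ≠ gE := by
        intro h
        have : (s(c, u) : Sym2 V) = s(c, d) := by rw [← hgcd]; exact congrArg Subtype.val h
        rcases Sym2.eq_iff.1 this with ⟨_, h2⟩ | ⟨h1, _⟩
        · exact hud h2
        · exact hdc h1.symm
      have hLadj : G.lineGraph.Adj fE e' :=
        SimpleGraph.lineGraph_adj_iff_exists.2 ⟨Ne.symm he'f, c, hcmf, Sym2.mem_mk_left c u⟩
      have he'B : e' ∈ B := hmin e' hLadj he'g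
      have hoe' : o ∉ (e' : Sym2 V) := by
        rw [hcoe]
        intro h
        rcases Sym2.mem_iff.1 h with h | h
        · exact hoc h
        · exact huo h.symm
      have hRe' : R' e' = pushAway c (R e') e' := by
        simp only [hR'def, if_neg he'g, if_neg he'f, if_neg hoe',
          if_pos (show c ∈ (e' : Sym2 V) from Sym2.mem_mk_left c u)]
      by_cases huR : u ∈ R e'
      · have h1 := (hχ e' (Set.mem_insert_of_mem _ he'B)).1
        have hmem := (hχ e' (Set.mem_insert_of_mem _ he'B)).2
        rw [hRe'] at hmem
        rw [hcoe] at hmem h1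
        have : χ e' = u := pushAway_endpoint hadj.ne' huR hmem h1
        exact .init (Or.inr ⟨e', he'B, this⟩)
      · exact .init (Or.inl (Or.inl (h3 e' he'B u (Sym2.mem_mk_right c u) huR)))
  have hχgE : χ gE = d := by
    have hmem := (hχ gE (Set.mem_insert _ _)).2
    simp only [hR'def, if_pos rfl, Set.mem_singleton_iff] at hmem
    exact hmem
  intro v
  refine (hZFS' v).bind ?_
  rintro x (((hx | hx) | hx) | hx)
  · exact .init (Or.inl (Or.inl hx))
  · rcases hx with hx | hx | hx
    · subst hx; exact hoX
    · subst hx; exact hcX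
    · subst hx; exact hdX
  · exact .init (Or.inl (Or.inr hx))
  · obtain ⟨e, he, rfl⟩ := hx
    rcases he with rfl | he
    · rw [hχgE]; exact hdX
    · exact .init (Or.inr ⟨e, he, rfl⟩)


lemma zf_main (G : SimpleGraph V) [Fintype V] :
    ∀ (n : ℕ) (B : Set G.edgeSet) (W : Set V) (R : G.edgeSet → Set V),
      Bᶜ.ncard + {e | e ∈ B ∧ ∀ x ∈ (e : Sym2 V), x ∈ R e}.ncard ≤ n →
      IsZeroForcingSet G.lineGraph B →
      (∀ e ∈ B, ∃ v ∈ (e : Sym2 V), v ∈ R e) →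
      (∀ e ∈ B, ∀ x ∈ (e : Sym2 V), x ∉ R e → x ∈ W) →
      ∃ χ : G.edgeSet → V, (∀ e ∈ B, χ e ∈ (e : Sym2 V) ∧ χ e ∈ R e) ∧
        IsZeroForcingSet G (W ∪ {v | ∀ w, ¬ G.Adj v w} ∪ (χ '' B)) := by
  intro n
  induction n with
  | zero =>
    intro B W R hmeas hZF h2 h3
    have hB0 : Bᶜ.ncard = 0 := by omega
    have hU0 : {e | e ∈ B ∧ ∀ x ∈ (e : Sym2 V), x ∈ R e}.ncard = 0 := by omega
    have hBc : Bᶜ = ∅ := (Set.ncard_eq_zero (Set.toFinite _)).1 hB0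
    have hBu : ∀ e, e ∈ B := by
      intro e
      by_contra h
      exact absurd (hBc ▸ h : e ∈ (∅ : Set G.edgeSet)) (Set.notMem_empty e)
    have hUe : {e | e ∈ B ∧ ∀ x ∈ (e : Sym2 V), x ∈ R e} = ∅ :=
      (Set.ncard_eq_zero (Set.toFinite _)).1 hU0
    have hnoun : ∀ e ∈ B, ¬ ∀ x ∈ (e : Sym2 V), x ∈ R e := by
      intro e he hall
      exact absurd (by have h : e ∈ {e | e ∈ B ∧ ∀ x ∈ (e : Sym2 V), x ∈ R e} := ⟨he, hall⟩; rw [hUe] at h; exact h)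
        (Set.notMem_empty e)
    exact zf_base G B W R hBu hnoun h2 h3
  | succ n ih =>
    intro B W R hmeas hZF h2 h3
    by_cases hBu : B = Set.univ
    · have hBu' : ∀ e, e ∈ B := fun e => hBu ▸ Set.mem_univ e
      by_cases hun : ∃ e, e ∈ B ∧ ∀ x ∈ (e : Sym2 V), x ∈ R e
      · obtain ⟨e₀, _, hune⟩ := hun
        exact zf_pair_step G n B W R hmeas hZF h2 h3 hBu' e₀ hune ih
      · push_neg at hun
        exact zf_base G B W R hBu'
          (fun e he hall => absurd hall (by push_neg; exact hun e he)) h2 h3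
    · exact zf_force_step G n B W R hmeas hZF h2 h3 hBu ih



theorem zfNumber_le_zfNumber_lineGraph_add_isolated {V : Type*} [Fintype V]
    (G : SimpleGraph V) (k : ℕ) (hk : {v : V | ∀ w, ¬ G.Adj v w}.ncard = k) :
    zfNumber G ≤ zfNumber G.lineGraph + k := by
  classical
  have hne : {n | ∃ S : Set G.edgeSet, IsZeroForcingSet G.lineGraph S ∧ S.ncard = n}.Nonempty :=
    ⟨(Set.univ : Set G.edgeSet).ncard, Set.univ, fun v => .init trivial, rfl⟩
  obtain ⟨B, hB, hBcard⟩ := Nat.sInf_mem hne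
  obtain ⟨χ, hχ, hZFS⟩ := zf_main G
    (Bᶜ.ncard + {e | e ∈ B ∧ ∀ x ∈ (e : Sym2 V), x ∈ (Set.univ : Set V)}.ncard)
    B ∅ (fun _ => Set.univ) le_rfl hB
    (fun e _ => by
      obtain ⟨a, b, hab, he⟩ := edge_repr G e
      exact ⟨a, by rw [he]; exact Sym2.mem_mk_left a b, trivial⟩)
    (fun e _ x _ hx => absurd trivial hx)
  have hle : zfNumber G ≤ ((∅ : Set V) ∪ {v | ∀ w, ¬ G.Adj v w} ∪ (χ '' B)).ncard :=
    Nat.sInf_le ⟨_, hZFS, rfl⟩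
  have heq : ((∅ : Set V) ∪ {v | ∀ w, ¬ G.Adj v w} ∪ (χ '' B)) =
      {v | ∀ w, ¬ G.Adj v w} ∪ (χ '' B) := by rw [Set.empty_union]
  rw [heq] at hle
  have h1 : ({v | ∀ w, ¬ G.Adj v w} ∪ (χ '' B)).ncard ≤
      {v : V | ∀ w, ¬ G.Adj v w}.ncard + (χ '' B).ncard := Set.ncard_union_le _ _
  have h2 : (χ '' B).ncard ≤ B.ncard := Set.ncard_image_le (Set.toFinite _)
  rw [hk] at h1
  rw [hBcard] at h2
  have hzl : zfNumber G.lineGraph =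
      sInf {n | ∃ S : Set G.edgeSet, IsZeroForcingSet G.lineGraph S ∧ S.ncard = n} := rfl
  rw [hzl]
  omega



end Paper
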